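/- Let n ≥ 1 and let L be a positive integer with 2n | L, and set M = L/n. Then for every even positive integer α, the generating polynomials satisfy F^{(α)}_{G^{(z^n+1)}(L)}(t) = (F^{(α)}_{G^{(z+1)}(M)}(t))^n as polynomials in t. -/

import Mathlib

open scoped BigOperators Matrix

/-- `θ_k = (2π/L)(k - 1/2)` for `k = 1, …, L` (here `k : Fin L` is the 0-based index,
so `θ_k = (2π/L)(k + 1/2)`). -/
noncomputable def theta (L : ℕ) (k : Fin L) : ℝ :=
  2 * Real.pi / L * ((k : ℝ) + 1 / 2)

/-- The half-shifted correlation matrix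
`G^{(f)}(L)_{nm} = ((-1)^{n-m}/L) Σ_{k=1}^{L} (f(e^{iθ_k})/|f(e^{iθ_k})|) e^{iθ_k (n-m)}`. -/
noncomputable def Gf (L : ℕ) (f : ℂ → ℂ) : Matrix (Fin L) (Fin L) ℂ :=
  Matrix.of fun n m : Fin L =>
    (-1 : ℂ) ^ ((n : ℤ) - (m : ℤ)) / (L : ℂ) *
      ∑ k : Fin L,
        f (Complex.exp (Complex.I * (theta L k : ℂ))) /
            ((‖f (Complex.exp (Complex.I * (theta L k : ℂ)))‖ : ℝ) : ℂ) *
          Complex.exp (Complex.I * (theta L k : ℂ) * (((n : ℤ) - (m : ℤ) : ℤ) : ℂ))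

/-- The square submatrix of `A` with rows indexed by `I` and columns indexed by `J`
(both in increasing order), as a determinant; it is `0` if `I.card ≠ J.card`. -/
noncomputable def subdetC {N : ℕ} (A : Matrix (Fin N) (Fin N) ℂ) (I J : Finset (Fin N)) : ℂ :=
  if h : J.card = I.card then
    Matrix.det (Matrix.of fun a b : Fin I.card =>
      A (I.orderEmbOfFin rfl a) (J.orderEmbOfFin h b))
  else 0

/-- `S_r^{(α)}(A) = Σ_{|I|=|J|=r} |det A[I,J]|^α`. -/
noncomputable def SpowC {N : ℕ} (A : Matrix (Fin N) (Fin N) ℂ) (α : ℝ) (r : ℕ) : ℝ :=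
  ∑ I ∈ Finset.univ.filter (fun I : Finset (Fin N) => I.card = r),
    ∑ J ∈ Finset.univ.filter (fun J : Finset (Fin N) => J.card = r),
      ‖subdetC A I J‖ ^ α

/-- The generating polynomial `F^{(α)}_A(t) = Σ_{r=0}^{N} S_r^{(α)}(A) t^r`. -/
noncomputable def genPoly {N : ℕ} (A : Matrix (Fin N) (Fin N) ℂ) (α : ℝ) : Polynomial ℝ :=
  ∑ r ∈ Finset.range (N + 1), Polynomial.C (SpowC A α r) * Polynomial.X ^ r

/-- **Generating-function factorization for `f(z) = zⁿ + 1`.**  Let `n ≥ 1`,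
`2n ∣ L`, `M = L/n`.  For every even positive integer `α`,
`F^{(α)}_{G^{(zⁿ+1)}(L)}(t) = (F^{(α)}_{G^{(z+1)}(M)}(t))ⁿ`. -/
noncomputable def absdet {ι κ : Type*} (A : Matrix ι κ ℂ) (I : Finset ι) (J : Finset κ) : ℝ :=
  if h : I.card = J.card then
    ‖(Matrix.det (Matrix.of fun a b : Fin I.card =>
      A (I.equivFin.symm a) (J.equivFin.symm (Fin.cast h b))))‖
  else 0

lemma abs_det_perm {r : ℕ} {ι κ : Type*} (A : Matrix ι κ ℂ) (u : Fin r → ι) (v : Fin r → κ)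
    (σ τ : Equiv.Perm (Fin r)) :
    ‖(Matrix.det (Matrix.of fun a b => A (u (σ a)) (v (τ b))))‖ =
    ‖(Matrix.det (Matrix.of fun a b => A (u a) (v b)))‖ := by
  have h1 : (Matrix.of fun a b => A (u (σ a)) (v (τ b)))
      = ((Matrix.of fun a b => A (u a) (v b)).submatrix σ id).submatrix id τ := rfl
  rw [h1, Matrix.det_permute' τ, Matrix.det_permute σ]
  simp [map_mul, abs_mul]
  rcases Int.units_eq_one_or τ.sign with h | h <;> rcases Int.units_eq_one_or σ.sign with h' | h' <;>
    simp [h, h']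

lemma absdet_spec {ι κ : Type*} (A : Matrix ι κ ℂ) (I : Finset ι) (J : Finset κ)
    {r : ℕ} (e : Fin r ≃ I) (f : Fin r ≃ J) :
    absdet A I J = ‖(Matrix.det (Matrix.of fun a b : Fin r => A (e a) (f b)))‖ := by
  have hI : I.card = r := by
    simpa [Fintype.card_coe] using (Fintype.card_congr e).symm
  have hJ : J.card = r := by
    simpa [Fintype.card_coe] using (Fintype.card_congr f).symm
  have h : I.card = J.card := hI.trans hJ.symm
  rw [absdet, dif_pos h]
  set c : Fin r ≃ Fin I.card := finCongr hI.symm with hc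
  have key : (Matrix.of fun a b : Fin I.card =>
      A (I.equivFin.symm a) (J.equivFin.symm (Fin.cast h b)))
      = (Matrix.of fun a b : Fin r =>
          A (I.equivFin.symm (c a)) (J.equivFin.symm (Fin.cast h (c b)))).submatrix
          c.symm c.symm := by
    ext a b
    simp [Matrix.submatrix_apply]
  rw [key, Matrix.det_submatrix_equiv_self]
  set E : Fin r ≃ I := c.trans I.equivFin.symm with hE
  set F : Fin r ≃ J := (c.trans (finCongr h)).trans J.equivFin.symm with hF
  have hF' : ∀ b : Fin r, (J.equivFin.symm (Fin.cast h (c b)) : κ) = F b := fun b => rfl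
  have hE' : ∀ a : Fin r, (I.equivFin.symm (c a) : ι) = E a := fun a => rfl
  have := abs_det_perm A (fun a => (E a : ι)) (fun b => (F b : κ))
    (e.trans E.symm).symm.symm (f.trans F.symm).symm.symm
  simp only [Equiv.symm_symm] at this
  calc ‖(Matrix.det (Matrix.of fun a b : Fin r =>
        A (I.equivFin.symm (c a)) (J.equivFin.symm (Fin.cast h (c b)))))‖
      = ‖(Matrix.det (Matrix.of fun a b : Fin r => A (E a) (F b)))‖ := rfl
    _ = ‖(Matrix.det (Matrix.of fun a b : Fin r =>
        A (E ((e.trans E.symm) a)) (F ((f.trans F.symm) b))))‖ := (this).symm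
    _ = ‖(Matrix.det (Matrix.of fun a b : Fin r => A (e a) (f b)))‖ := by
        simp [Equiv.trans_apply]

lemma absdet_ne {ι κ : Type*} (A : Matrix ι κ ℂ) {I : Finset ι} {J : Finset κ}
    (h : ¬ I.card = J.card) : absdet A I J = 0 := by rw [absdet, dif_neg h]

lemma absdet_nonneg {ι κ : Type*} (A : Matrix ι κ ℂ) (I : Finset ι) (J : Finset κ) :
    0 ≤ absdet A I J := by
  rw [absdet]
  split_ifs
  · exact norm_nonneg _
  · exact le_refl 0

noncomputable def Spow' {ι : Type*} [Fintype ι] (A : Matrix ι ι ℂ) (α : ℝ) (r : ℕ) : ℝ :=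
  ∑ I : Finset ι, ∑ J : Finset ι,
    if I.card = r ∧ J.card = r then absdet A I J ^ α else 0

noncomputable def genP {ι : Type*} [Fintype ι] (A : Matrix ι ι ℂ) (α : ℝ) : Polynomial ℝ :=
  ∑ r ∈ Finset.range (Fintype.card ι + 1), Polynomial.C (Spow' A α r) * Polynomial.X ^ r

lemma Spow'_eq_zero {ι : Type*} [Fintype ι] (A : Matrix ι ι ℂ) (α : ℝ) {r : ℕ}
    (hr : Fintype.card ι < r) : Spow' A α r = 0 := by
  rw [Spow']
  refine Finset.sum_eq_zero fun I _ => Finset.sum_eq_zero fun J _ => ?_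
  rw [if_neg]
  rintro ⟨h1, -⟩
  exact absurd (h1 ▸ Finset.card_le_univ I) (by simpa [Finset.card_univ] using hr.not_ge)

lemma coeff_genP {ι : Type*} [Fintype ι] (A : Matrix ι ι ℂ) (α : ℝ) (k : ℕ) :
    (genP A α).coeff k = Spow' A α k := by
  rw [genP, Polynomial.finset_sum_coeff]
  simp only [Polynomial.coeff_C_mul, Polynomial.coeff_X_pow, mul_ite, mul_one, mul_zero]
  rw [Finset.sum_ite_eq (Finset.range (Fintype.card ι + 1)) k (fun r => Spow' A α r)]
  by_cases hk : k ∈ Finset.range (Fintype.card ι + 1)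
  · rw [if_pos hk]
  · rw [if_neg hk, Spow'_eq_zero]
    simpa [Nat.lt_succ_iff, not_le] using hk

lemma genP_ext {ι κ : Type*} [Fintype ι] [Fintype κ] (A : Matrix ι ι ℂ) (B : Matrix κ κ ℂ)
    (α : ℝ) (h : ∀ r, Spow' A α r = Spow' B α r) : genP A α = genP B α := by
  ext k; rw [coeff_genP, coeff_genP, h]

lemma abs_subdetC_eq {N : ℕ} (A : Matrix (Fin N) (Fin N) ℂ) (I J : Finset (Fin N))
    (h : I.card = J.card) : ‖subdetC A I J‖ = absdet A I J := by
  rw [subdetC, dif_pos h.symm,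
    absdet_spec A I J (I.orderIsoOfFin rfl).toEquiv (J.orderIsoOfFin h.symm).toEquiv]
  rfl

lemma genPoly_eq_genP {N : ℕ} (A : Matrix (Fin N) (Fin N) ℂ) (α : ℝ) :
    genPoly A α = genP A α := by
  have hS : ∀ r, SpowC A α r = Spow' A α r := by
    intro r
    rw [SpowC, Spow']
    rw [Finset.sum_filter]
    refine Finset.sum_congr rfl fun I _ => ?_
    rw [Finset.sum_filter]
    by_cases hI : I.card = r
    · rw [if_pos hI]
      refine Finset.sum_congr rfl fun J _ => ?_
      by_cases hJ : J.card = r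
      · rw [if_pos hJ, if_pos ⟨hI, hJ⟩, abs_subdetC_eq A I J (hI.trans hJ.symm)]
      · rw [if_neg hJ, if_neg (by tauto)]
    · rw [if_neg hI]
      exact (Finset.sum_eq_zero fun J _ => by rw [if_neg (by tauto)]).symm
  rw [genPoly, genP, Fintype.card_fin]
  exact Finset.sum_congr rfl fun r _ => by rw [hS]

lemma absdet_submatrix_equiv {ι κ : Type*} (A : Matrix ι ι ℂ) (e : κ ≃ ι)
    (I J : Finset κ) :
    absdet (A.submatrix e e) I J = absdet A (I.map e.toEmbedding) (J.map e.toEmbedding) := by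
  by_cases h : I.card = J.card
  · set r := I.card with hr
    let eI : Fin r ≃ ↥I := I.equivFin.symm
    let eJ : Fin r ≃ ↥J := (finCongr h).trans J.equivFin.symm
    let mI : ↥I ≃ ↥(I.map e.toEmbedding) :=
      Equiv.subtypeEquiv e (fun a => by simp [Finset.mem_map_equiv])
    let mJ : ↥J ≃ ↥(J.map e.toEmbedding) :=
      Equiv.subtypeEquiv e (fun a => by simp [Finset.mem_map_equiv])
    rw [absdet_spec (A.submatrix e e) I J eI eJ,
      absdet_spec A _ _ (eI.trans mI) (eJ.trans mJ)]
    rfl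
  · rw [absdet, dif_neg h, absdet, dif_neg (by simpa using h)]

lemma Spow'_submatrix {ι κ : Type*} [Fintype ι] [Fintype κ] (A : Matrix ι ι ℂ) (e : κ ≃ ι)
    (α : ℝ) (r : ℕ) : Spow' (A.submatrix e e) α r = Spow' A α r := by
  rw [Spow', Spow', ← Equiv.sum_comp (Equiv.finsetCongr e)
    (fun I : Finset ι => ∑ J : Finset ι, if I.card = r ∧ J.card = r then absdet A I J ^ α else 0)]
  refine Finset.sum_congr rfl fun I _ => ?_
  rw [← Equiv.sum_comp (Equiv.finsetCongr e)
    (fun J : Finset ι => if (Equiv.finsetCongr e I).card = r ∧ J.card = r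
      then absdet A (Equiv.finsetCongr e I) J ^ α else 0)]
  refine Finset.sum_congr rfl fun J _ => ?_
  simp only [Equiv.finsetCongr_apply, Finset.card_map]
  rw [absdet_submatrix_equiv]

lemma absdet_mul_sign {ι κ : Type*} (A : Matrix ι κ ℂ) (s : ι → ℂ) (t : κ → ℂ)
    (hs : ∀ a, ‖s a‖ = 1) (ht : ∀ b, ‖t b‖ = 1)
    (I : Finset ι) (J : Finset κ) :
    absdet (Matrix.of fun a b => s a * t b * A a b) I J = absdet A I J := by
  by_cases h : I.card = J.card
  · set r := I.card with hr
    let eI : Fin r ≃ ↥I := I.equivFin.symm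
    let eJ : Fin r ≃ ↥J := (finCongr h).trans J.equivFin.symm
    rw [absdet_spec _ I J eI eJ, absdet_spec A I J eI eJ]
    have key : (Matrix.of fun a b : Fin r =>
        (Matrix.of fun a b => s a * t b * A a b) (eI a) (eJ b))
        = Matrix.diagonal (fun a => s (eI a)) *
            (Matrix.of fun a b : Fin r => A (eI a) (eJ b)) *
            Matrix.diagonal (fun b => t (eJ b)) := by
      ext a b
      simp only [Matrix.of_apply, Matrix.mul_diagonal, Matrix.diagonal_mul]
      ring
    rw [key, Matrix.det_mul, Matrix.det_mul, Matrix.det_diagonal, Matrix.det_diagonal,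
      norm_mul, norm_mul, norm_prod, norm_prod]
    simp [hs, ht]
  · rw [absdet_ne _ h, absdet_ne _ h]

lemma Spow'_mul_sign {ι : Type*} [Fintype ι] (A : Matrix ι ι ℂ) (s : ι → ℂ)
    (hs : ∀ a, ‖s a‖ = 1) (α : ℝ) (r : ℕ) :
    Spow' (Matrix.of fun a b => s a * s b * A a b) α r = Spow' A α r := by
  rw [Spow', Spow']
  refine Finset.sum_congr rfl fun I _ => Finset.sum_congr rfl fun J _ => ?_
  rw [absdet_mul_sign A s s hs hs]

lemma absdet_empty {ι κ : Type*} (A : Matrix ι κ ℂ) :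
    absdet A (∅ : Finset ι) (∅ : Finset κ) = 1 := by
  haveI h1 : IsEmpty ↥(∅ : Finset ι) := ⟨fun x => absurd x.2 (Finset.notMem_empty _)⟩
  haveI h2 : IsEmpty ↥(∅ : Finset κ) := ⟨fun x => absurd x.2 (Finset.notMem_empty _)⟩
  rw [absdet_spec A ∅ ∅ (Equiv.equivOfIsEmpty (Fin 0) _) (Equiv.equivOfIsEmpty (Fin 0) _)]
  rw [Matrix.det_fin_zero, norm_one]

lemma Spow'_zero {ι : Type*} [Fintype ι] (A : Matrix ι ι ℂ) (α : ℝ) : Spow' A α 0 = 1 := by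
  rw [Spow']
  rw [Finset.sum_eq_single (∅ : Finset ι)]
  · rw [Finset.sum_eq_single (∅ : Finset ι)]
    · simp [absdet_empty, Real.one_rpow]
    · intro J _ hJ
      rw [if_neg]
      rintro ⟨-, h2⟩
      exact hJ (Finset.card_eq_zero.mp h2)
    · exact fun h => absurd (Finset.mem_univ _) h
  · intro I _ hI
    refine Finset.sum_eq_zero fun J _ => ?_
    rw [if_neg]
    rintro ⟨h1, -⟩
    exact hI (Finset.card_eq_zero.mp h1)
  · exact fun h => absurd (Finset.mem_univ _) h

def joinF {ι κ : Type*} [DecidableEq ι] [DecidableEq κ] (I₁ : Finset ι) (I₂ : Finset κ) :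
    Finset (ι ⊕ κ) :=
  I₁.map ⟨Sum.inl, Sum.inl_injective⟩ ∪ I₂.map ⟨Sum.inr, Sum.inr_injective⟩

variable {ι κ : Type*} [DecidableEq ι] [DecidableEq κ]

lemma mem_joinF_inl {I₁ : Finset ι} {I₂ : Finset κ} {a : ι} :
    Sum.inl a ∈ joinF I₁ I₂ ↔ a ∈ I₁ := by simp [joinF]

lemma mem_joinF_inr {I₁ : Finset ι} {I₂ : Finset κ} {a : κ} :
    Sum.inr a ∈ joinF I₁ I₂ ↔ a ∈ I₂ := by simp [joinF]

lemma card_joinF (I₁ : Finset ι) (I₂ : Finset κ) :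
    (joinF I₁ I₂).card = I₁.card + I₂.card := by
  rw [joinF, Finset.card_union_of_disjoint, Finset.card_map, Finset.card_map]
  simp [Finset.disjoint_left]

noncomputable def joinEquiv (I₁ : Finset ι) (I₂ : Finset κ) :
    ↥I₁ ⊕ ↥I₂ ≃ ↥(joinF I₁ I₂) :=
  Equiv.ofBijective
    (fun x => ⟨Sum.map Subtype.val Subtype.val x, by
      rcases x with x | x
      · exact mem_joinF_inl.mpr x.2
      · exact mem_joinF_inr.mpr x.2⟩)
    (by
      constructor
      · rintro (x | x) (y | y) h <;> simp only [Subtype.mk.injEq, Sum.map] at h <;>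
          simp only [Sum.elim_inl, Sum.elim_inr, Function.comp_apply, Sum.inl.injEq,
            Sum.inr.injEq, reduceCtorEq] at h <;> simp only [Sum.inl.injEq, Sum.inr.injEq] <;>
          exact Subtype.ext h
      · rintro ⟨(x | x), hx⟩
        · exact ⟨Sum.inl ⟨x, mem_joinF_inl.mp hx⟩, rfl⟩
        · exact ⟨Sum.inr ⟨x, mem_joinF_inr.mp hx⟩, rfl⟩)

lemma joinEquiv_val (I₁ : Finset ι) (I₂ : Finset κ) (x : ↥I₁ ⊕ ↥I₂) :
    ((joinEquiv I₁ I₂ x : ↥(joinF I₁ I₂)) : ι ⊕ κ) = Sum.map Subtype.val Subtype.val x := rfl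

lemma joinF_bijective :
    Function.Bijective (fun p : Finset ι × Finset κ => joinF p.1 p.2) := by
  constructor
  · rintro ⟨I₁, I₂⟩ ⟨J₁, J₂⟩ h
    have h' : joinF I₁ I₂ = joinF J₁ J₂ := h
    simp only [Prod.mk.injEq]
    constructor
    · ext a; rw [← mem_joinF_inl (I₂ := I₂), h', mem_joinF_inl]
    · ext a; rw [← mem_joinF_inr (I₁ := I₁), h', mem_joinF_inr]
  · intro I
    refine ⟨⟨I.preimage Sum.inl Sum.inl_injective.injOn,
      I.preimage Sum.inr Sum.inr_injective.injOn⟩, ?_⟩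
    ext x
    rcases x with a | a
    · rw [mem_joinF_inl, Finset.mem_preimage]
    · rw [mem_joinF_inr, Finset.mem_preimage]

lemma card_isLeft {a b r : ℕ} (g : Fin r ≃ (Fin a ⊕ Fin b)) :
    Fintype.card {p : Fin r // ((g p).isLeft : Prop)} = a := by
  rw [Fintype.card_congr ((g.subtypeEquiv
    (q := fun s : Fin a ⊕ Fin b => (s.isLeft : Prop)) (fun p => Iff.rfl)).trans
    Equiv.subtypeSum)]
  rw [Fintype.card_sum]
  have h2 : IsEmpty {x : Fin b // ((Sum.inr x : Fin a ⊕ Fin b).isLeft : Prop)} :=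
    ⟨fun x => by simpa using x.2⟩
  rw [Fintype.card_eq_zero (α := {x : Fin b // ((Sum.inr x : Fin a ⊕ Fin b).isLeft : Prop)})]
  rw [Fintype.card_congr (Equiv.subtypeUnivEquiv (fun x => by simp))]
  simp

section FromBlocks
variable (B : Matrix ι ι ℂ) (C : Matrix κ κ ℂ)

lemma absdet_fromBlocks_eq (I₁ J₁ : Finset ι) (I₂ J₂ : Finset κ)
    (h₁ : I₁.card = J₁.card) (h₂ : I₂.card = J₂.card) :
    absdet (Matrix.fromBlocks B 0 0 C) (joinF I₁ I₂) (joinF J₁ J₂)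
      = absdet B I₁ J₁ * absdet C I₂ J₂ := by
  set a := I₁.card with ha
  set b := I₂.card with hb
  let e₁ : Fin a ≃ ↥I₁ := I₁.equivFin.symm
  let f₁ : Fin a ≃ ↥J₁ := (finCongr h₁).trans J₁.equivFin.symm
  let e₂ : Fin b ≃ ↥I₂ := I₂.equivFin.symm
  let f₂ : Fin b ≃ ↥J₂ := (finCongr h₂).trans J₂.equivFin.symm
  let E : Fin (a + b) ≃ ↥(joinF I₁ I₂) :=
    finSumFinEquiv.symm.trans ((Equiv.sumCongr e₁ e₂).trans (joinEquiv I₁ I₂))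
  let F : Fin (a + b) ≃ ↥(joinF J₁ J₂) :=
    finSumFinEquiv.symm.trans ((Equiv.sumCongr f₁ f₂).trans (joinEquiv J₁ J₂))
  rw [absdet_spec _ _ _ E F, absdet_spec B I₁ J₁ e₁ f₁, absdet_spec C I₂ J₂ e₂ f₂]
  have key : (Matrix.of fun p q : Fin (a + b) =>
      Matrix.fromBlocks B 0 0 C (E p : ι ⊕ κ) (F q : ι ⊕ κ))
      = (Matrix.fromBlocks (Matrix.of fun x y : Fin a => B (e₁ x) (f₁ y)) 0 0
          (Matrix.of fun x y : Fin b => C (e₂ x) (f₂ y))).submatrix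
          finSumFinEquiv.symm finSumFinEquiv.symm := by
    ext p q
    rcases hp : finSumFinEquiv.symm p with x | x <;> rcases hq : finSumFinEquiv.symm q with y | y <;>
      simp [E, F, Equiv.trans_apply, hp, hq, joinEquiv_val, Matrix.submatrix_apply]
  rw [key, Matrix.det_submatrix_equiv_self, Matrix.det_fromBlocks_zero₂₁, norm_mul]

lemma absdet_fromBlocks_ne (I₁ J₁ : Finset ι) (I₂ J₂ : Finset κ)
    (h : I₁.card + I₂.card = J₁.card + J₂.card) (hne : I₁.card ≠ J₁.card) :
    absdet (Matrix.fromBlocks B 0 0 C) (joinF I₁ I₂) (joinF J₁ J₂) = 0 := by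
  set a := I₁.card with ha
  set b := I₂.card with hb
  set c := J₁.card with hc
  set d := J₂.card with hd
  let gE : Fin (a + b) ≃ (Fin a ⊕ Fin b) := finSumFinEquiv.symm
  let gF : Fin (a + b) ≃ (Fin c ⊕ Fin d) := (finCongr h).trans finSumFinEquiv.symm
  let E : Fin (a + b) ≃ ↥(joinF I₁ I₂) :=
    gE.trans ((Equiv.sumCongr I₁.equivFin.symm I₂.equivFin.symm).trans (joinEquiv I₁ I₂))
  let F : Fin (a + b) ≃ ↥(joinF J₁ J₂) :=
    gF.trans ((Equiv.sumCongr J₁.equivFin.symm J₂.equivFin.symm).trans (joinEquiv J₁ J₂))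
  rw [absdet_spec _ _ _ E F]
  have hE : ∀ p, ((E p : ↥(joinF I₁ I₂)) : ι ⊕ κ).isLeft = (gE p).isLeft := by
    intro p
    show ((joinEquiv I₁ I₂ ((Equiv.sumCongr _ _) (gE p))) : ι ⊕ κ).isLeft = _
    rcases hp : gE p with x | x <;> simp [joinEquiv_val, hp]
  have hF : ∀ p, ((F p : ↥(joinF J₁ J₂)) : ι ⊕ κ).isLeft = (gF p).isLeft := by
    intro p
    show ((joinEquiv J₁ J₂ ((Equiv.sumCongr _ _) (gF p))) : ι ⊕ κ).isLeft = _
    rcases hp : gF p with x | x <;> simp [joinEquiv_val, hp]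
  have hdet : Matrix.det (Matrix.of fun p q : Fin (a + b) =>
      Matrix.fromBlocks B 0 0 C (E p : ι ⊕ κ) (F q : ι ⊕ κ)) = 0 := by
    rw [Matrix.det_apply]
    refine Finset.sum_eq_zero fun σ _ => ?_
    have hzero : (∏ i, (Matrix.of fun p q : Fin (a + b) =>
        Matrix.fromBlocks B 0 0 C (E p : ι ⊕ κ) (F q : ι ⊕ κ)) (σ i) i) = 0 := by
      by_contra hprod
      have hne' : ∀ i, Matrix.fromBlocks B 0 0 C (E (σ i) : ι ⊕ κ) (F i : ι ⊕ κ) ≠ 0 := by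
        intro i hi
        exact hprod (Finset.prod_eq_zero (Finset.mem_univ i) hi)
      have key : ∀ i, ((E (σ i) : ι ⊕ κ)).isLeft = ((F i : ι ⊕ κ)).isLeft := by
        intro i
        have hi := hne' i
        rcases hEi : (E (σ i) : ι ⊕ κ) with x | x <;> rcases hFi : (F i : ι ⊕ κ) with y | y <;>
          rw [hEi, hFi] at hi <;> simp_all [Matrix.fromBlocks]
      -- build an equivalence between the `isLeft` subtypes
      let eqv : {i : Fin (a + b) // ((F i : ι ⊕ κ).isLeft : Prop)} ≃
          {i : Fin (a + b) // ((E i : ι ⊕ κ).isLeft : Prop)} :=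
        { toFun := fun x => ⟨σ x.1, by rw [key x.1]; exact x.2⟩
          invFun := fun y => ⟨σ.symm y.1, by
            have := key (σ.symm y.1)
            rw [Equiv.apply_symm_apply] at this
            rw [← this]; exact y.2⟩
          left_inv := fun x => by simp
          right_inv := fun y => by simp }
      have hcardE : Fintype.card {i : Fin (a + b) // ((E i : ι ⊕ κ).isLeft : Prop)} = a := by
        rw [Fintype.card_congr (Equiv.subtypeEquivRight (fun i => by rw [hE i]))]
        exact card_isLeft gE
      have hcardF : Fintype.card {i : Fin (a + b) // ((F i : ι ⊕ κ).isLeft : Prop)} = c := by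
        rw [Fintype.card_congr (Equiv.subtypeEquivRight (fun i => by rw [hF i]))]
        exact card_isLeft gF
      exact hne (by rw [← hcardE, ← Fintype.card_congr eqv, hcardF])
    rw [hzero, smul_zero]
  rw [hdet, norm_zero]

end FromBlocks

section Sums
variable (B : Matrix ι ι ℂ) (C : Matrix κ κ ℂ)

lemma term_eq {α : ℝ} (hα : 0 < α) (r : ℕ) (I₁ J₁ : Finset ι) (I₂ J₂ : Finset κ) :
    (if (joinF I₁ I₂).card = r ∧ (joinF J₁ J₂).card = r
      then absdet (Matrix.fromBlocks B 0 0 C) (joinF I₁ I₂) (joinF J₁ J₂) ^ α else 0)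
    = ∑ p ∈ Finset.HasAntidiagonal.antidiagonal r,
        (if I₁.card = p.1 ∧ J₁.card = p.1 then absdet B I₁ J₁ ^ α else 0) *
        (if I₂.card = p.2 ∧ J₂.card = p.2 then absdet C I₂ J₂ ^ α else 0) := by
  rw [card_joinF, card_joinF]
  by_cases hIJ : I₁.card + I₂.card = r ∧ J₁.card + J₂.card = r
  · obtain ⟨hI, hJ⟩ := hIJ
    rw [if_pos ⟨hI, hJ⟩]
    by_cases hmatch : I₁.card = J₁.card
    · have h₂ : I₂.card = J₂.card := by omega
      rw [absdet_fromBlocks_eq B C I₁ J₁ I₂ J₂ hmatch h₂,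
        Real.mul_rpow (absdet_nonneg _ _ _) (absdet_nonneg _ _ _)]
      rw [Finset.sum_eq_single (I₁.card, I₂.card)]
      · rw [if_pos ⟨rfl, hmatch.symm⟩, if_pos ⟨rfl, h₂.symm⟩]
      · rintro ⟨p1, p2⟩ hp hne
        by_cases c₁ : I₁.card = p1 ∧ J₁.card = p1
        · by_cases c₂ : I₂.card = p2 ∧ J₂.card = p2
          · exact absurd (by simp [← c₁.1, ← c₂.1]) hne
          · rw [if_neg c₂, mul_zero]
        · rw [if_neg c₁, zero_mul]
      · intro hnotmem
        exact absurd (Finset.HasAntidiagonal.mem_antidiagonal.mpr hI) hnotmem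
    · rw [absdet_fromBlocks_ne B C I₁ J₁ I₂ J₂ (by omega) hmatch, Real.zero_rpow hα.ne']
      refine (Finset.sum_eq_zero fun p hp => ?_).symm
      by_cases c₁ : I₁.card = p.1 ∧ J₁.card = p.1
      · exact absurd (c₁.1.trans c₁.2.symm) hmatch
      · rw [if_neg c₁, zero_mul]
  · rw [if_neg hIJ]
    refine (Finset.sum_eq_zero fun p hp => ?_).symm
    rw [Finset.HasAntidiagonal.mem_antidiagonal] at hp
    by_cases c₁ : I₁.card = p.1 ∧ J₁.card = p.1
    · by_cases c₂ : I₂.card = p.2 ∧ J₂.card = p.2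
      · exact absurd ⟨by omega, by omega⟩ hIJ
      · rw [if_neg c₂, mul_zero]
    · rw [if_neg c₁, zero_mul]

lemma Spow'_fromBlocks [Fintype ι] [Fintype κ] {α : ℝ} (hα : 0 < α) (r : ℕ) :
    Spow' (Matrix.fromBlocks B 0 0 C) α r
      = ∑ p ∈ Finset.HasAntidiagonal.antidiagonal r, Spow' B α p.1 * Spow' C α p.2 := by
  rw [Spow']
  rw [← joinF_bijective.sum_comp (fun I : Finset (ι ⊕ κ) => ∑ J : Finset (ι ⊕ κ),
    if I.card = r ∧ J.card = r then absdet (Matrix.fromBlocks B 0 0 C) I J ^ α else 0)]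
  have step1 : ∀ x : Finset ι × Finset κ,
      (∑ J : Finset (ι ⊕ κ), if (joinF x.1 x.2).card = r ∧ J.card = r
        then absdet (Matrix.fromBlocks B 0 0 C) (joinF x.1 x.2) J ^ α else 0)
      = ∑ y : Finset ι × Finset κ, ∑ p ∈ Finset.HasAntidiagonal.antidiagonal r,
          (if x.1.card = p.1 ∧ y.1.card = p.1 then absdet B x.1 y.1 ^ α else 0) *
          (if x.2.card = p.2 ∧ y.2.card = p.2 then absdet C x.2 y.2 ^ α else 0) := by
    intro x
    rw [← joinF_bijective.sum_comp (fun J : Finset (ι ⊕ κ) =>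
      if (joinF x.1 x.2).card = r ∧ J.card = r
        then absdet (Matrix.fromBlocks B 0 0 C) (joinF x.1 x.2) J ^ α else 0)]
    exact Finset.sum_congr rfl fun y _ => term_eq B C hα r x.1 y.1 x.2 y.2
  rw [Finset.sum_congr rfl fun x _ => step1 x]
  calc (∑ x : Finset ι × Finset κ, ∑ y : Finset ι × Finset κ, ∑ p ∈ Finset.HasAntidiagonal.antidiagonal r,
        (if x.1.card = p.1 ∧ y.1.card = p.1 then absdet B x.1 y.1 ^ α else 0) *
        (if x.2.card = p.2 ∧ y.2.card = p.2 then absdet C x.2 y.2 ^ α else 0))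
      = ∑ x : Finset ι × Finset κ, ∑ p ∈ Finset.HasAntidiagonal.antidiagonal r, ∑ y : Finset ι × Finset κ,
        (if x.1.card = p.1 ∧ y.1.card = p.1 then absdet B x.1 y.1 ^ α else 0) *
        (if x.2.card = p.2 ∧ y.2.card = p.2 then absdet C x.2 y.2 ^ α else 0) :=
      Finset.sum_congr rfl fun x _ => Finset.sum_comm
    _ = ∑ p ∈ Finset.HasAntidiagonal.antidiagonal r, ∑ x : Finset ι × Finset κ, ∑ y : Finset ι × Finset κ,
        (if x.1.card = p.1 ∧ y.1.card = p.1 then absdet B x.1 y.1 ^ α else 0) *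
        (if x.2.card = p.2 ∧ y.2.card = p.2 then absdet C x.2 y.2 ^ α else 0) :=
      Finset.sum_comm
    _ = ∑ p ∈ Finset.HasAntidiagonal.antidiagonal r, Spow' B α p.1 * Spow' C α p.2 := by
      refine Finset.sum_congr rfl fun p _ => ?_
      rw [Spow', Spow']
      simp only [Fintype.sum_prod_type]
      simp only [Finset.sum_mul]
      simp only [Finset.mul_sum]
      refine Finset.sum_congr rfl fun x1 _ => ?_
      exact Finset.sum_comm

end Sums

lemma genP_submatrix {ι κ : Type*} [Fintype ι] [Fintype κ] (A : Matrix ι ι ℂ) (e : κ ≃ ι)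
    (α : ℝ) : genP (A.submatrix e e) α = genP A α :=
  genP_ext _ _ _ (fun r => Spow'_submatrix A e α r)

lemma genP_mul {ι κ : Type*} [DecidableEq ι] [DecidableEq κ] [Fintype ι] [Fintype κ]
    (B : Matrix ι ι ℂ) (C : Matrix κ κ ℂ) {α : ℝ} (hα : 0 < α) :
    genP (Matrix.fromBlocks B 0 0 C) α = genP B α * genP C α := by
  ext k
  rw [coeff_genP, Polynomial.coeff_mul, Spow'_fromBlocks B C hα k]
  exact Finset.sum_congr rfl fun p _ => by rw [coeff_genP, coeff_genP]

lemma genP_blockDiagonal {κ : Type*} [Fintype κ] [DecidableEq κ] (Bmat : Matrix κ κ ℂ)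
    {α : ℝ} (hα : 0 < α) (n : ℕ) :
    genP (Matrix.blockDiagonal (fun _ : Fin n => Bmat)) α = (genP Bmat α) ^ n := by
  induction n with
  | zero =>
    rw [pow_zero, genP]
    have hc : Fintype.card (κ × Fin 0) = 0 := by simp
    rw [hc]
    simp [Spow'_zero]
  | succ n ih =>
    let E : (κ × Fin (n + 1)) ≃ ((κ × Fin n) ⊕ κ) :=
      ((Equiv.refl κ).prodCongr finSumFinEquiv.symm).trans
        ((Equiv.prodSumDistrib κ (Fin n) (Fin 1)).trans
          ((Equiv.refl (κ × Fin n)).sumCongr (Equiv.prodUnique κ (Fin 1))))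
    have hmat : Matrix.blockDiagonal (fun _ : Fin (n + 1) => Bmat)
        = (Matrix.fromBlocks (Matrix.blockDiagonal fun _ : Fin n => Bmat) 0 0 Bmat).submatrix
            E E := by
      ext p q
      rcases p with ⟨x, i⟩
      rcases q with ⟨y, j⟩
      obtain ⟨s, rfl⟩ := finSumFinEquiv.surjective i
      obtain ⟨t, rfl⟩ := finSumFinEquiv.surjective j
      rcases s with s | s <;> rcases t with t | t <;>
        simp [E, Matrix.blockDiagonal_apply, Matrix.submatrix_apply, Matrix.fromBlocks,
          EmbeddingLike.apply_eq_iff_eq, Fin.eq_zero, Equiv.prodSumDistrib,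
          Equiv.sumProdDistrib, Fin.ext_iff] <;>
        (intro h; exfalso; have hs := s.2; have ht := t.2; omega)
    rw [hmat, genP_submatrix, genP_mul _ _ hα, ih, pow_succ]

noncomputable def cf (L : ℕ) (f : ℂ → ℂ) (k : Fin L) : ℂ :=
  f (Complex.exp (Complex.I * (theta L k : ℂ))) /
    ((‖f (Complex.exp (Complex.I * (theta L k : ℂ)))‖ : ℝ) : ℂ)

lemma Gf_apply (L : ℕ) (f : ℂ → ℂ) (p q : Fin L) :
    Gf L f p q = (-1 : ℂ) ^ ((p : ℤ) - (q : ℤ)) / (L : ℂ) *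
      ∑ k : Fin L, cf L f k *
        Complex.exp (Complex.I * (theta L k : ℂ) * (((p : ℤ) - (q : ℤ) : ℤ) : ℂ)) := rfl

section Analytic
variable {n M : ℕ} (hn : 0 < n) (hM : 0 < M)

lemma tau_val (m : Fin n) (j : Fin M) :
    ((finProdFinEquiv (m, j) : Fin (n * M)) : ℕ) = j + M * m := rfl

include hn hM in
lemma n_theta_tau (m : Fin n) (j : Fin M) :
    (n : ℝ) * theta (n * M) (finProdFinEquiv (m, j)) = theta M j + 2 * Real.pi * m := by
  rw [theta, theta, tau_val]
  have hn' : (n : ℝ) ≠ 0 := Nat.cast_ne_zero.mpr hn.ne'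
  have hM' : (M : ℝ) ≠ 0 := Nat.cast_ne_zero.mpr hM.ne'
  push_cast
  field_simp
  ring

include hn hM in
lemma theta_tau_eq (m : Fin n) (j : Fin M) :
    ((theta (n * M) (finProdFinEquiv (m, j)) : ℝ) : ℂ)
      = (((theta M j : ℝ) : ℂ) + 2 * Real.pi * m) / n := by
  have h := n_theta_tau hn hM m j
  have hn' : (n : ℂ) ≠ 0 := Nat.cast_ne_zero.mpr hn.ne'
  rw [eq_div_iff hn', mul_comm _ (n : ℂ)]
  exact_mod_cast congrArg (Complex.ofReal) h

include hn hM in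
lemma exp_pow_n (m : Fin n) (j : Fin M) :
    (Complex.exp (Complex.I * (theta (n * M) (finProdFinEquiv (m, j)) : ℂ))) ^ n
      = Complex.exp (Complex.I * (theta M j : ℂ)) := by
  rw [← Complex.exp_nat_mul]
  have hn' : (n : ℂ) ≠ 0 := Nat.cast_ne_zero.mpr hn.ne'
  have key : (n : ℂ) * (Complex.I * (theta (n * M) (finProdFinEquiv (m, j)) : ℂ))
      = Complex.I * (theta M j : ℂ) + (m : ℤ) * (2 * Real.pi * Complex.I) := by
    rw [theta_tau_eq hn hM m j]
    push_cast
    field_simp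
  rw [key, Complex.exp_add, Complex.exp_int_mul_two_pi_mul_I, mul_one]

include hn hM in
lemma cf_tau (m : Fin n) (j : Fin M) :
    cf (n * M) (fun z => z ^ n + 1) (finProdFinEquiv (m, j)) = cf M (fun z => z + 1) j := by
  have h := exp_pow_n hn hM m j
  simp only [cf]
  rw [h]

include hn hM in
lemma exp_phase (d : ℤ) (m : Fin n) (j : Fin M) :
    Complex.exp (Complex.I * (theta (n * M) (finProdFinEquiv (m, j)) : ℂ) * (d : ℂ))
      = Complex.exp (Complex.I * 2 * Real.pi * d / n) ^ (m : ℕ) *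
        Complex.exp (Complex.I * (theta M j : ℂ) * (d : ℂ) / n) := by
  rw [← Complex.exp_nat_mul, ← Complex.exp_add]
  congr 1
  rw [theta_tau_eq hn hM m j]
  have hn' : (n : ℂ) ≠ 0 := Nat.cast_ne_zero.mpr hn.ne'
  field_simp
  ring

include hn hM in
lemma key_sum (d : ℤ) :
    (∑ k : Fin (n * M), cf (n * M) (fun z => z ^ n + 1) k *
        Complex.exp (Complex.I * (theta (n * M) k : ℂ) * (d : ℂ)))
      = (∑ m : Fin n, Complex.exp (Complex.I * 2 * Real.pi * d / n) ^ (m : ℕ)) *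
        ∑ j : Fin M, cf M (fun z => z + 1) j *
          Complex.exp (Complex.I * (theta M j : ℂ) * (d : ℂ) / n) := by
  rw [← Equiv.sum_comp (finProdFinEquiv : Fin n × Fin M ≃ Fin (n * M))
    (fun k => cf (n * M) (fun z => z ^ n + 1) k *
      Complex.exp (Complex.I * (theta (n * M) k : ℂ) * (d : ℂ)))]
  rw [Fintype.sum_prod_type, Finset.sum_mul]
  refine Finset.sum_congr rfl fun m _ => ?_
  rw [Finset.mul_sum]
  refine Finset.sum_congr rfl fun j _ => ?_
  rw [cf_tau hn hM m j, exp_phase hn hM d m j]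
  ring

end Analytic

lemma neg_one_zpow_congr {x y : ℤ} (h : Even (x - y)) : (-1 : ℂ) ^ x = (-1 : ℂ) ^ y := by
  have hx : x = y + (x - y) := by ring
  rw [hx, zpow_add₀ (by norm_num : (-1 : ℂ) ≠ 0), h.neg_one_zpow, mul_one]

section Geom
variable {n : ℕ} (hn : 0 < n)

include hn in
lemma geom_zero {d : ℤ} (hnd : ¬ (n : ℤ) ∣ d) :
    (∑ m : Fin n, Complex.exp (Complex.I * 2 * Real.pi * d / n) ^ (m : ℕ)) = 0 := by
  set ω := Complex.exp (Complex.I * 2 * Real.pi * d / n) with hω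
  have hn' : (n : ℂ) ≠ 0 := Nat.cast_ne_zero.mpr hn.ne'
  have h2pi : (2 * (Real.pi : ℂ) * Complex.I) ≠ 0 := by
    simp [Real.pi_ne_zero, Complex.I_ne_zero, Complex.ofReal_ne_zero]
  have hω1 : ω ≠ 1 := by
    intro h
    rw [hω, Complex.exp_eq_one_iff] at h
    obtain ⟨k, hk⟩ := h
    apply hnd
    field_simp at hk
    have h2 : (d : ℂ) * (2 * (Real.pi : ℂ) * Complex.I) = ((k * n : ℤ) : ℂ) *
        (2 * (Real.pi : ℂ) * Complex.I) := by push_cast; linear_combination (2 * (Real.pi : ℂ) * Complex.I) * hk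
    have h3 : (d : ℂ) = ((k * n : ℤ) : ℂ) := mul_right_cancel₀ h2pi h2
    have h4 : d = k * n := by exact_mod_cast h3
    exact ⟨k, by rw [h4]; ring⟩
  have hωn : ω ^ n = 1 := by
    rw [hω, ← Complex.exp_nat_mul]
    have : (n : ℂ) * (Complex.I * 2 * Real.pi * d / n) = (d : ℤ) * (2 * Real.pi * Complex.I) := by
      field_simp
    rw [this, Complex.exp_int_mul_two_pi_mul_I]
  rw [Fin.sum_univ_eq_sum_range (fun m => ω ^ m) n, geom_sum_eq hω1, hωn, sub_self, zero_div]

include hn in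
lemma geom_dvd (e : ℤ) :
    (∑ m : Fin n, Complex.exp (Complex.I * 2 * Real.pi * (n * e : ℤ) / n) ^ (m : ℕ)) = n := by
  have hn' : (n : ℂ) ≠ 0 := Nat.cast_ne_zero.mpr hn.ne'
  have hω : Complex.exp (Complex.I * 2 * Real.pi * ((n * e : ℤ) : ℂ) / n) = 1 := by
    have : Complex.I * 2 * Real.pi * ((n * e : ℤ) : ℂ) / n = (e : ℤ) * (2 * Real.pi * Complex.I) := by
      push_cast; field_simp
    rw [this, Complex.exp_int_mul_two_pi_mul_I]
  rw [hω]
  simp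

end Geom

section Entry
variable {n M : ℕ} (hn : 0 < n) (hM : 0 < M)

noncomputable def sgn (n : ℕ) (a : Fin M) : ℂ := (-1 : ℂ) ^ (((n - 1 : ℕ) : ℤ) * (a : ℤ))

noncomputable def sigEq (n M : ℕ) : Fin M × Fin n ≃ Fin (n * M) :=
  finProdFinEquiv.trans (finCongr (Nat.mul_comm M n))

lemma sigEq_val (a : Fin M) (r : Fin n) : ((sigEq n M (a, r)) : ℕ) = r + n * a := rfl

include hn hM in
lemma Gf_entry (a b : Fin M) (r s : Fin n) :
    Gf (n * M) (fun z => z ^ n + 1) (sigEq n M (a, r)) (sigEq n M (b, s))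
      = if r = s then sgn n a * sgn n b * Gf M (fun z => z + 1) a b else 0 := by
  rw [Gf_apply]
  set d : ℤ := ((sigEq n M (a, r) : Fin (n * M)) : ℤ) - ((sigEq n M (b, s) : Fin (n * M)) : ℤ)
    with hd0
  have hd : d = ((r : ℤ) - (s : ℤ)) + (n : ℤ) * ((a : ℤ) - (b : ℤ)) := by
    rw [hd0]
    have h1 : ((sigEq n M (a, r) : Fin (n * M)) : ℤ) = (r : ℤ) + (n : ℤ) * (a : ℤ) := by
      have := sigEq_val a r
      push_cast [this]
      ring
    have h2 : ((sigEq n M (b, s) : Fin (n * M)) : ℤ) = (s : ℤ) + (n : ℤ) * (b : ℤ) := by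
      have := sigEq_val b s
      push_cast [this]
      ring
    rw [h1, h2]; ring
  by_cases hrs : r = s
  · subst hrs
    rw [if_pos rfl]
    have hd' : d = (n : ℤ) * ((a : ℤ) - (b : ℤ)) := by rw [hd]; ring
    rw [key_sum hn hM d]
    have hgeom : (∑ m : Fin n, Complex.exp (Complex.I * 2 * Real.pi * d / n) ^ (m : ℕ))
        = (n : ℂ) := by
      have := geom_dvd hn ((a : ℤ) - (b : ℤ))
      rw [← hd'] at this
      exact_mod_cast this
    rw [hgeom]
    have hsum : (∑ j : Fin M, cf M (fun z => z + 1) j *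
          Complex.exp (Complex.I * (theta M j : ℂ) * (d : ℂ) / n))
        = ∑ j : Fin M, cf M (fun z => z + 1) j *
          Complex.exp (Complex.I * (theta M j : ℂ) * ((((a : ℤ) - (b : ℤ)) : ℤ) : ℂ)) := by
      refine Finset.sum_congr rfl fun j _ => ?_
      congr 1
      have hn' : (n : ℂ) ≠ 0 := Nat.cast_ne_zero.mpr hn.ne'
      have hdc : (d : ℂ) = (n : ℂ) * (((a : ℤ) : ℂ) - ((b : ℤ) : ℂ)) := by
        rw [hd']; push_cast; ring
      rw [hdc]
      congr 1
      field_simp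
      push_cast
      ring
    rw [hsum, Gf_apply]
    have hn' : (n : ℂ) ≠ 0 := Nat.cast_ne_zero.mpr hn.ne'
    have hM' : (M : ℂ) ≠ 0 := Nat.cast_ne_zero.mpr hM.ne'
    have hscal : (-1 : ℂ) ^ d / ((n * M : ℕ) : ℂ) * (n : ℂ)
        = sgn n a * sgn n b * ((-1 : ℂ) ^ ((a : ℤ) - (b : ℤ)) / (M : ℂ)) := by
      have hsgn : sgn n a * sgn n b * (-1 : ℂ) ^ ((a : ℤ) - (b : ℤ)) = (-1 : ℂ) ^ d := by
        rw [sgn, sgn, ← zpow_add₀ (by norm_num : (-1 : ℂ) ≠ 0),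
          ← zpow_add₀ (by norm_num : (-1 : ℂ) ≠ 0)]
        refine (neg_one_zpow_congr ?_).symm
        refine ⟨-(((n : ℤ) - 1) * (b : ℤ)), ?_⟩
        rw [hd']
        have hcast : ((n - 1 : ℕ) : ℤ) = (n : ℤ) - 1 := by
          have := hn
          omega
        rw [hcast]
        ring
      rw [← hsgn]
      push_cast
      field_simp
    linear_combination (∑ j : Fin M, cf M (fun z => z + 1) j *
      Complex.exp (Complex.I * (theta M j : ℂ) * ((((a : ℤ) - (b : ℤ)) : ℤ) : ℂ))) * hscal
  · rw [if_neg hrs]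
    have hnd : ¬ (n : ℤ) ∣ d := by
      intro ⟨e, he⟩
      have hdvd : (n : ℤ) ∣ ((r : ℤ) - (s : ℤ)) := by
        refine ⟨e - ((a : ℤ) - (b : ℤ)), ?_⟩
        rw [hd] at he
        linarith [he]
      have hzero : (r : ℤ) - (s : ℤ) = 0 := by
        refine Int.eq_zero_of_abs_lt_dvd hdvd ?_
        rw [abs_lt]
        constructor
        · have := s.2; have := r.2; push_cast; omega
        · have := s.2; have := r.2; push_cast; omega
      apply hrs
      have : (r : ℤ) = (s : ℤ) := by omega
      exact Fin.ext (by exact_mod_cast this)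
    rw [key_sum hn hM d, geom_zero hn hnd, zero_mul, mul_zero]

end Entry

lemma Gf_decomp {n M : ℕ} (hn : 0 < n) (hM : 0 < M) :
    Gf (n * M) (fun z => z ^ n + 1)
      = (Matrix.blockDiagonal (fun _ : Fin n => Matrix.of fun a b : Fin M =>
          sgn n a * sgn n b * Gf M (fun z => z + 1) a b)).submatrix
          (⇑(sigEq n M).symm) (⇑(sigEq n M).symm) := by
  ext p q
  obtain ⟨⟨a, r⟩, rfl⟩ := (sigEq n M).surjective p
  obtain ⟨⟨b, s⟩, rfl⟩ := (sigEq n M).surjective q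
  rw [Matrix.submatrix_apply, Equiv.symm_apply_apply, Equiv.symm_apply_apply]
  rw [show Gf (n * M) (fun z => z ^ n + 1) ((sigEq n M) (a, r)) ((sigEq n M) (b, s))
    = _ from Gf_entry hn hM a b r s]
  simp [Matrix.blockDiagonal_apply]


set_option maxHeartbeats 2000000 in
theorem genPoly_factorization_zn_plus_one (n L M : ℕ) (hn : 1 ≤ n) (hL : 0 < L)
    (hdvd : 2 * n ∣ L) (hM : M = L / n) :
    ∀ α : ℕ, Even α → 0 < α →
      genPoly (Gf L (fun z => z ^ n + 1)) (α : ℝ) =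
        (genPoly (Gf M (fun z => z + 1)) (α : ℝ)) ^ n := by
  intro α hEven hpos
  have hn0 : 0 < n := hn
  have hndvd : n ∣ L := dvd_trans (dvd_mul_left n 2) hdvd
  have hL' : L = n * M := by rw [hM]; exact (Nat.mul_div_cancel' hndvd).symm
  subst hL'
  have hM0 : 0 < M := Nat.pos_of_ne_zero (fun h => by simp [h] at hL)
  have hα : (0 : ℝ) < (α : ℝ) := Nat.cast_pos.mpr hpos
  rw [genPoly_eq_genP, genPoly_eq_genP]
  rw [Gf_decomp hn0 hM0, genP_submatrix]
  rw [genP_blockDiagonal _ hα n]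
  congr 1
  refine genP_ext _ _ _ (fun r => ?_)
  exact Spow'_mul_sign (Gf M (fun z => z + 1)) (sgn n)
    (fun a => by rw [sgn, norm_zpow]; simp) (α : ℝ) r
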